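/- A traceless symmetric 3×3 matrix Q has exactly two distinct eigenvalues if and only if Q = s(n⊗n − (1/3)I) for some real s ≠ 0 and some unit vector n ∈ S². -/

import Mathlib

open Matrix

/-- A traceless symmetric `3×3` real matrix `Q` has exactly two distinct
eigenvalues if and only if `Q = s (n ⊗ n − (1/3) I)` for some real `s ≠ 0` and a unit vector
`n ∈ S²` (i.e. `Q` is uniaxial). -/
theorem uniaxial_iff_two_eigenvalues
    (Q : Matrix (Fin 3) (Fin 3) ℝ)
    (hsymm : Q.IsSymm) (htr : Q.trace = 0)
    (hherm : Q.IsHermitian) :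
    (Finset.univ.image hherm.eigenvalues).card = 2 ↔
      ∃ s : ℝ, s ≠ 0 ∧ ∃ n : Fin 3 → ℝ, (∑ i, n i ^ 2) = 1 ∧
        Q = Matrix.of fun i j =>
          s * (n i * n j - if i = j then (1 : ℝ) / 3 else 0) := by
  have htrace : ∑ i, hherm.eigenvalues i = 0 := by
    rw [← htr]
    conv_rhs => rw [hherm.spectral_theorem]
    rw [Unitary.conjStarAlgAut_apply, Matrix.trace_mul_comm, ← Matrix.mul_assoc, Unitary.coe_star_mul_self, Matrix.one_mul,
      Matrix.trace_diagonal]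
    simp
  have hUU : ∀ i j, ∑ m, hherm.eigenvectorBasis m i * hherm.eigenvectorBasis m j
      = if i = j then 1 else 0 := by
    intro i j
    have h := mem_unitaryGroup_iff.mp hherm.eigenvectorUnitary.2
    have h2 := (Matrix.ext_iff.2 h) i j
    simp only [Matrix.mul_apply, Matrix.star_apply, Matrix.one_apply,
      Matrix.IsHermitian.eigenvectorUnitary_apply, star_trivial] at h2
    convert h2 using 2
  have hQ : ∀ i j, Q i j = ∑ m, hherm.eigenvalues m *
      (hherm.eigenvectorBasis m i * hherm.eigenvectorBasis m j) := by
    intro i j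
    conv_lhs => rw [hherm.spectral_theorem]
    simp [Matrix.mul_apply, Matrix.diagonal_apply, Finset.sum_ite_eq, mul_comm, mul_assoc,
      mul_left_comm]
  have hunit : ∀ k, ∑ i, (hherm.eigenvectorBasis k) i ^ 2 = 1 := by
    intro k
    have h := hherm.eigenvectorBasis.orthonormal.1 k
    rw [EuclideanSpace.norm_eq] at h
    have h2 : (∑ i, ‖(hherm.eigenvectorBasis k) i‖ ^ 2) = 1 := by
      have := congrArg (· ^ 2) h
      simpa [Real.sq_sqrt (Finset.sum_nonneg fun i _ => sq_nonneg _)] using this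
    simpa [sq_abs] using h2
  have hsum3 : hherm.eigenvalues 0 + hherm.eigenvalues 1 + hherm.eigenvalues 2 = 0 := by
    simpa [Fin.sum_univ_three] using htrace
  constructor
  · -- forward
    intro hcard
    have key : ∀ k : Fin 3, hherm.eigenvalues k ≠ 0 →
        (∀ j, j ≠ k → hherm.eigenvalues j = -hherm.eigenvalues k / 2) →
        ∃ s : ℝ, s ≠ 0 ∧ ∃ n : Fin 3 → ℝ, (∑ i, n i ^ 2) = 1 ∧
          Q = Matrix.of fun i j =>
            s * (n i * n j - if i = j then (1 : ℝ) / 3 else 0) := by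
      intro k hk hj
      refine ⟨3 * hherm.eigenvalues k / 2, fun h => hk (by linarith),
        fun i => hherm.eigenvectorBasis k i, hunit k, ?_⟩
      ext i j
      rw [Matrix.of_apply, hQ i j]
      have he : ∀ m, hherm.eigenvalues m *
          (hherm.eigenvectorBasis m i * hherm.eigenvectorBasis m j) =
          (if m = k then 3 * hherm.eigenvalues k / 2 *
            (hherm.eigenvectorBasis m i * hherm.eigenvectorBasis m j) else 0) +
          (-hherm.eigenvalues k / 2) *
            (hherm.eigenvectorBasis m i * hherm.eigenvectorBasis m j) := by
        intro m
        by_cases hm : m = k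
        · subst hm; simp; ring
        · rw [hj m hm]; simp [hm]
      rw [Finset.sum_congr rfl fun m _ => he m, Finset.sum_add_distrib,
        Finset.sum_ite_eq' Finset.univ k, ← Finset.mul_sum, hUU i j]
      simp only [Finset.mem_univ, if_true]
      by_cases hij : i = j <;> simp [hij] <;> ring
    have himg3 : Finset.univ.image hherm.eigenvalues =
        {hherm.eigenvalues 0, hherm.eigenvalues 1, hherm.eigenvalues 2} := by
      ext x
      simp only [Finset.mem_image, Finset.mem_insert, Finset.mem_singleton, Finset.mem_univ,
        true_and]
      constructor
      · rintro ⟨i, rfl⟩; fin_cases i <;> simp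
      · rintro (rfl | rfl | rfl)
        exacts [⟨0, rfl⟩, ⟨1, rfl⟩, ⟨2, rfl⟩]
    rw [himg3] at hcard
    by_cases h01 : hherm.eigenvalues 0 = hherm.eigenvalues 1 <;>
      by_cases h02 : hherm.eigenvalues 0 = hherm.eigenvalues 2 <;>
      by_cases h12 : hherm.eigenvalues 1 = hherm.eigenvalues 2
    · simp [← h01, ← h02] at hcard
    · exact absurd (h01.symm.trans h02) h12
    · exact absurd (h12.symm.trans h01.symm) (fun h => h02 h.symm)
    · -- e0 = e1 ≠ e2 : k = 2
      refine key 2 (fun h => h02 (by linarith)) ?_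
      intro j hjne
      fin_cases j
      · show hherm.eigenvalues 0 = -hherm.eigenvalues 2 / 2; linarith
      · show hherm.eigenvalues 1 = -hherm.eigenvalues 2 / 2; linarith
      · simp at hjne
    · exact absurd (h02.trans h12.symm) h01
    · -- e0 = e2 ≠ e1 : k = 1
      refine key 1 (fun h => h01 (by linarith)) ?_
      intro j hjne
      fin_cases j
      · show hherm.eigenvalues 0 = -hherm.eigenvalues 1 / 2; linarith
      · simp at hjne
      · show hherm.eigenvalues 2 = -hherm.eigenvalues 1 / 2; linarith
    · -- e1 = e2 ≠ e0 : k = 0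
      refine key 0 (fun h => h01 (by linarith)) ?_
      intro j hjne
      fin_cases j
      · simp at hjne
      · show hherm.eigenvalues 1 = -hherm.eigenvalues 0 / 2; linarith
      · show hherm.eigenvalues 2 = -hherm.eigenvalues 0 / 2; linarith
    · -- all distinct : card 3
      have h3 : ({hherm.eigenvalues 0, hherm.eigenvalues 1, hherm.eigenvalues 2} :
          Finset ℝ).card = 3 := by
        rw [Finset.card_insert_of_notMem (by simp [h01, h02]),
          Finset.card_insert_of_notMem (by simp [h12]), Finset.card_singleton]
      omega
  · -- backward
    rintro ⟨s, hs, n, hn, hQeq⟩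
    have hn3 : n 0 ^ 2 + n 1 ^ 2 + n 2 ^ 2 = 1 := by
      simpa [Fin.sum_univ_three] using hn
    have hQe : ∀ a b : Fin 3, Q a b = s * (n a * n b - if a = b then (1 : ℝ) / 3 else 0) := by
      intro a b; rw [hQeq]; rfl
    have claim : ∀ i, hherm.eigenvalues i = 2 * s / 3 ∨ hherm.eigenvalues i = -s / 3 := by
      intro i
      have hv := hherm.mulVec_eigenvectorBasis i
      have h0 := congrFun hv 0
      have h1 := congrFun hv 1
      have h2 := congrFun hv 2
      simp only [Matrix.mulVec, dotProduct, Fin.sum_univ_three, Pi.smul_apply,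
        smul_eq_mul, hQe] at h0 h1 h2
      norm_num [Fin.ext_iff] at h0 h1 h2
      have hv3 : hherm.eigenvectorBasis i 0 ^ 2 + hherm.eigenvectorBasis i 1 ^ 2 +
          hherm.eigenvectorBasis i 2 ^ 2 = 1 := by
        simpa [Fin.sum_univ_three] using hunit i
      have hc : hherm.eigenvalues i * (n 0 * hherm.eigenvectorBasis i 0 +
          n 1 * hherm.eigenvectorBasis i 1 + n 2 * hherm.eigenvectorBasis i 2) =
          2 * s / 3 * (n 0 * hherm.eigenvectorBasis i 0 +
          n 1 * hherm.eigenvectorBasis i 1 + n 2 * hherm.eigenvectorBasis i 2) := by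
        linear_combination (s * (n 0 * hherm.eigenvectorBasis i 0 +
          n 1 * hherm.eigenvectorBasis i 1 + n 2 * hherm.eigenvectorBasis i 2)) * hn3 -
          n 0 * h0 - n 1 * h1 - n 2 * h2
      by_cases hcz : n 0 * hherm.eigenvectorBasis i 0 + n 1 * hherm.eigenvectorBasis i 1 +
          n 2 * hherm.eigenvectorBasis i 2 = 0
      · have hnz : hherm.eigenvectorBasis i 0 ≠ 0 ∨ hherm.eigenvectorBasis i 1 ≠ 0 ∨
            hherm.eigenvectorBasis i 2 ≠ 0 := by
          by_contra h
          push_neg at h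
          rw [h.1, h.2.1, h.2.2] at hv3
          norm_num at hv3
        refine Or.inr ?_
        rcases hnz with h | h | h
        · refine mul_right_cancel₀ h ?_
          linear_combination s * n 0 * hcz - h0
        · refine mul_right_cancel₀ h ?_
          linear_combination s * n 1 * hcz - h1
        · refine mul_right_cancel₀ h ?_
          linear_combination s * n 2 * hcz - h2
      · exact Or.inl (mul_right_cancel₀ hcz hc)
    have h2s : (2 * s / 3 : ℝ) ≠ -s / 3 := fun h => hs (by linarith)
    have ex1 : ∃ i, hherm.eigenvalues i = 2 * s / 3 := by
      by_contra h
      push_neg at h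
      have h0 := (claim 0).resolve_left (h 0)
      have h1 := (claim 1).resolve_left (h 1)
      have h2 := (claim 2).resolve_left (h 2)
      apply hs; linarith
    have ex2 : ∃ i, hherm.eigenvalues i = -s / 3 := by
      by_contra h
      push_neg at h
      have h0 := (claim 0).resolve_right (h 0)
      have h1 := (claim 1).resolve_right (h 1)
      have h2 := (claim 2).resolve_right (h 2)
      apply hs; linarith
    have himg : Finset.univ.image hherm.eigenvalues = {2 * s / 3, -s / 3} := by
      apply Finset.Subset.antisymm
      · intro x hx
        simp only [Finset.mem_image, Finset.mem_univ, true_and] at hx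
        obtain ⟨i, rfl⟩ := hx
        simpa using claim i
      · intro x hx
        simp only [Finset.mem_insert, Finset.mem_singleton] at hx
        simp only [Finset.mem_image, Finset.mem_univ, true_and]
        rcases hx with rfl | rfl
        · exact ex1
        · exact ex2
    rw [himg, Finset.card_pair h2s]
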